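/- The output λ_F of the adapted firm-copies-proposing deferred acceptance algorithm in the associated one-to-one market is a stable* matching; in particular, the set of stable* matchings is nonempty. -/

import Mathlib

open Classical

noncomputable section

/- The associated one-to-one market: firm `i : ι` has copies indexed by
`Fin (J i)`; firm-copies have linear preferences `Pf f` over `Option W`
(`none` = `∅`, larger = better); workers have linear preferences `Pw w` over
`Option (Σ i, Fin (J i))`, which refine a linear preference `PwFirm w` over the
firms (`Option ι`): all copies of a preferred firm rank above all copies of a
less preferred firm, and copies of the same firm are ranked by index. -/

/-- The best element of a finite set of alternatives (`none` included) with
respect to a linear order `L`. -/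
def bestOf {α : Type*} (L : LinearOrder (Option α)) (s : Finset (Option α)) :
    Option α :=
  WithBot.unbotD none (@Finset.max (Option α) L s)

/-- State of the deferred acceptance algorithm: the current tentative matching
(from the firm-copies' side) and, for each firm-copy, the set of workers that
have rejected it so far. -/
structure DAState (ι W : Type*) (J : ι → ℕ) where
  lam : (Σ i : ι, Fin (J i)) → Option W
  rej : (Σ i : ι, Fin (J i)) → Finset W

variable {ι W : Type*} [Fintype ι] [DecidableEq ι] [Fintype W] [DecidableEq W]
  {J : ι → ℕ}

/-- The offer made by firm-copy `f` at the current stage: if `f` is unmatched,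
it targets its best acceptable worker among those who have not rejected it yet,
and it is *authorized* to make this offer only if no other copy of the same
firm currently holds a worker that `f` strictly prefers. -/
def proposalF [Fintype ι] [∀ i : ι, Fintype (Fin (J i))]
    (Pf : (Σ i : ι, Fin (J i)) → LinearOrder (Option W))
    (st : DAState ι W J) (f : Σ i : ι, Fin (J i)) : Option W :=
  if st.lam f ≠ none then none
  else
    match bestOf (Pf f)
        (insert none ((Finset.univ.filter (fun w : W => w ∉ st.rej f)).image some)) with
    | none => none
    | some w =>
        if ∀ (j' : Fin (J f.1)) (w' : W),
            st.lam ⟨f.1, j'⟩ = some w' → ¬ (Pf f).lt (some w) (some w')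
        then some w else none

/-- The firm-copy (if any) tentatively selected by worker `w`: the best, with
respect to `Pw w`, among the copies currently offering to `w`, her current
partner, and `∅`. -/
def chosenByWorker
    (Pf : (Σ i : ι, Fin (J i)) → LinearOrder (Option W))
    (Pw : W → LinearOrder (Option (Σ i : ι, Fin (J i))))
    (st : DAState ι W J) (w : W) : Option (Σ i : ι, Fin (J i)) :=
  bestOf (Pw w)
    (insert none
      ((Finset.univ.filter
        (fun f : Σ i : ι, Fin (J i) =>
          proposalF Pf st f = some w ∨ st.lam f = some w)).image some))

/-- One stage of the adapted firm-copies-proposing deferred acceptance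
algorithm. -/
def stepF
    (Pf : (Σ i : ι, Fin (J i)) → LinearOrder (Option W))
    (Pw : W → LinearOrder (Option (Σ i : ι, Fin (J i))))
    (st : DAState ι W J) : DAState ι W J where
  lam := fun f =>
    if h : ∃ w : W, chosenByWorker Pf Pw st w = some f then some h.choose
    else none
  rej := fun f =>
    st.rej f ∪
      Finset.univ.filter
        (fun w : W =>
          (proposalF Pf st f = some w ∨ st.lam f = some w) ∧
            chosenByWorker Pf Pw st w ≠ some f)

/-- The output `λ_F` of the adapted firm-copies-proposing deferred acceptance
algorithm (run for sufficiently many stages so that it has terminated). -/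
def daOutputF
    (Pf : (Σ i : ι, Fin (J i)) → LinearOrder (Option W))
    (Pw : W → LinearOrder (Option (Σ i : ι, Fin (J i)))) :
    (Σ i : ι, Fin (J i)) → Option W :=
  ((stepF Pf Pw)^[(Fintype.card (Σ i : ι, Fin (J i)) * Fintype.card W + 1) *
      (Fintype.card (Σ i : ι, Fin (J i)) + Fintype.card W + 2)]
    ⟨fun _ => none, fun _ => ∅⟩).lam

/-- The worker-side of the output matching. -/
def daOutputFW
    (Pf : (Σ i : ι, Fin (J i)) → LinearOrder (Option W))
    (Pw : W → LinearOrder (Option (Σ i : ι, Fin (J i)))) (w : W) :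
    Option (Σ i : ι, Fin (J i)) :=
  if h : ∃ f : Σ i : ι, Fin (J i), daOutputF Pf Pw f = some w then some h.choose
  else none

set_option linter.unusedSectionVars false
section Aux
variable (Pf : (Σ i : ι, Fin (J i)) → LinearOrder (Option W))
variable (Pw : W → LinearOrder (Option (Σ i : ι, Fin (J i))))

lemma bestOf_mem {α : Type*} (L : LinearOrder (Option α)) {s : Finset (Option α)}
    (hs : s.Nonempty) : bestOf L s ∈ s := by
  letI := L
  have h := s.max'_mem hs
  have : bestOf L s = s.max' hs := by
    rw [bestOf, ← Finset.coe_max' hs]; rfl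
  rwa [this]

lemma le_bestOf {α : Type*} (L : LinearOrder (Option α)) {s : Finset (Option α)}
    {x : Option α} (hx : x ∈ s) : L.le x (bestOf L s) := by
  letI := L
  have hs : s.Nonempty := ⟨x, hx⟩
  have : bestOf L s = s.max' hs := by
    rw [bestOf, ← Finset.coe_max' hs]; rfl
  rw [this]; exact s.le_max' x hx

/-- candidacy of firm-copy `f` for worker `w`. -/
def Cand (st : DAState ι W J) (f : Σ i : ι, Fin (J i)) (w : W) : Prop :=
  proposalF Pf st f = some w ∨ st.lam f = some w

lemma proposalF_spec {st : DAState ι W J} {f : Σ i : ι, Fin (J i)} {w : W}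
    (h : proposalF Pf st f = some w) :
    st.lam f = none ∧ w ∉ st.rej f ∧ (Pf f).le none (some w) ∧
    (∀ w' : W, w' ∉ st.rej f → (Pf f).le (some w') (some w)) ∧
    (∀ (j' : Fin (J f.1)) (w' : W), st.lam ⟨f.1, j'⟩ = some w' →
      ¬ (Pf f).lt (some w) (some w')) := by
  letI := Pf f
  by_cases hl : st.lam f = none
  · rw [proposalF] at h
    simp only [hl, ne_eq, not_true_eq_false, if_false, not_false_eq_true, if_true] at h
    set s := insert none ((Finset.univ.filter (fun w : W => w ∉ st.rej f)).image some) with hsdef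
    cases hb : bestOf (Pf f) s with
    | none => rw [hb] at h; simp at h
    | some wb =>
      rw [hb] at h
      replace h : (if ∀ (j' : Fin (J f.1)) (w' : W),
          st.lam ⟨f.1, j'⟩ = some w' → ¬ (Pf f).lt (some wb) (some w')
          then some wb else none) = some w := h
      by_cases ha : ∀ (j' : Fin (J f.1)) (w' : W),
          st.lam ⟨f.1, j'⟩ = some w' → ¬ (Pf f).lt (some wb) (some w')
      · rw [if_pos ha] at h
        obtain rfl : wb = w := by injection h
        have hmem : bestOf (Pf f) s ∈ s := bestOf_mem _ ⟨none, Finset.mem_insert_self _ _⟩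
        rw [hb] at hmem
        have hw : wb ∉ st.rej f := by
          rcases Finset.mem_insert.1 hmem with h' | h'
          · exact absurd h' (by simp)
          · rcases Finset.mem_image.1 h' with ⟨w', hw', he⟩
            obtain rfl : w' = wb := by injection he
            exact (Finset.mem_filter.1 hw').2
        refine ⟨hl, hw, ?_, ?_, ha⟩
        · have := le_bestOf (Pf f) (s := s) (Finset.mem_insert_self _ _)
          rwa [hb] at this
        · intro w' hw'
          have : some w' ∈ s := by
            refine Finset.mem_insert_of_mem (Finset.mem_image.2 ⟨w', ?_, rfl⟩)
            exact Finset.mem_filter.2 ⟨Finset.mem_univ _, hw'⟩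
          have := le_bestOf (Pf f) this
          rwa [hb] at this
      · rw [if_neg ha] at h; exact absurd h (by simp)
  · rw [proposalF] at h; simp [hl] at h

lemma chosen_spec {st : DAState ι W J} {w : W} {f : Σ i : ι, Fin (J i)}
    (h : chosenByWorker Pf Pw st w = some f) : Cand Pf st f w := by
  have hmem : chosenByWorker Pf Pw st w ∈ _ :=
    bestOf_mem (Pw w) ⟨none, Finset.mem_insert_self _ _⟩
  rw [chosenByWorker] at h hmem
  rw [h] at hmem
  rcases Finset.mem_insert.1 hmem with h' | h'
  · exact absurd h' (by simp)
  · rcases Finset.mem_image.1 h' with ⟨f', hf', he⟩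
    obtain rfl : f' = f := by injection he
    exact (Finset.mem_filter.1 hf').2

lemma le_chosen {st : DAState ι W J} {w : W} {f : Σ i : ι, Fin (J i)}
    (h : Cand Pf st f w) : (Pw w).le (some f) (chosenByWorker Pf Pw st w) := by
  apply le_bestOf
  exact Finset.mem_insert_of_mem (Finset.mem_image.2 ⟨f,
    Finset.mem_filter.2 ⟨Finset.mem_univ _, h⟩, rfl⟩)

lemma none_le_chosen {st : DAState ι W J} {w : W} :
    (Pw w).le none (chosenByWorker Pf Pw st w) :=
  le_bestOf (Pw w) (Finset.mem_insert_self _ _)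

lemma cand_unique {st : DAState ι W J} {f : Σ i : ι, Fin (J i)} {w w' : W}
    (h : Cand Pf st f w) (h' : Cand Pf st f w') : w = w' := by
  rcases h with h | h <;> rcases h' with h' | h'
  · rw [h] at h'; injection h'
  · exact absurd (proposalF_spec Pf h).1 (by rw [h']; simp)
  · exact absurd (proposalF_spec Pf h').1 (by rw [h]; simp)
  · rw [h] at h'; injection h'

lemma stepF_lam_iff {st : DAState ι W J} {f : Σ i : ι, Fin (J i)} {w : W} :
    (stepF Pf Pw st).lam f = some w ↔ chosenByWorker Pf Pw st w = some f := by
  constructor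
  · intro h
    rw [stepF] at h
    simp only at h
    split at h
    · next hex =>
      obtain rfl : hex.choose = w := by injection h
      exact hex.choose_spec
    · exact absurd h (by simp)
  · intro h
    have hex : ∃ w', chosenByWorker Pf Pw st w' = some f := ⟨w, h⟩
    have : hex.choose = w := by
      have h1 := hex.choose_spec
      exact cand_unique Pf (chosen_spec Pf Pw h1) (chosen_spec Pf Pw h)
    rw [stepF]
    simp only
    rw [dif_pos hex, this]

lemma stepF_rej_iff {st : DAState ι W J} {f : Σ i : ι, Fin (J i)} {w : W} :
    w ∈ (stepF Pf Pw st).rej f ↔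
      w ∈ st.rej f ∨ (Cand Pf st f w ∧ chosenByWorker Pf Pw st w ≠ some f) := by
  rw [stepF]
  simp [Cand]

lemma stepF_rej_subset (st : DAState ι W J) (f : Σ i : ι, Fin (J i)) :
    st.rej f ⊆ (stepF Pf Pw st).rej f := fun w hw => (stepF_rej_iff Pf Pw).2 (Or.inl hw)

variable (PwFirm : W → LinearOrder (Option ι))

/-- The invariants maintained by the algorithm. -/
structure Invs (st : DAState ι W J) : Prop where
  inv1 : ∀ f w, st.lam f = some w → w ∉ st.rej f
  ir : ∀ f w, st.lam f = some w → (Pf f).le none (some w)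
  wr : ∀ f w, st.lam f = some w → (Pw w).le none (some f)
  inv3 : ∀ f w w', st.lam f = some w → (Pf f).lt (some w) (some w') → w' ∈ st.rej f
  inv4 : ∀ f w, w ∈ st.rej f → (Pw w).lt (some f) none ∨
    ∃ g, st.lam g = some w ∧ (Pw w).lt (some f) (some g)
  invE : ∀ (i : ι) (j j' : Fin (J i)) (w w' : W), st.lam ⟨i,j⟩ = some w →
    st.lam ⟨i,j'⟩ = some w' → ¬ (Pf ⟨i,j⟩).lt (some w) (some w')

lemma invs_init : Invs Pf Pw (⟨fun _ => none, fun _ => ∅⟩ : DAState ι W J) := by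
  constructor <;> intro f <;> simp

lemma sandwich
    (hcond1 : ∀ (w : W) (i i' : ι) (j : Fin (J i)) (j' : Fin (J i')),
      (PwFirm w).lt (some i') (some i) → (Pw w).lt (some ⟨i', j'⟩) (some ⟨i, j⟩))
    {w' : W} {i : ι} {j j' : Fin (J i)} {h : Σ i : ι, Fin (J i)}
    (h1 : (Pw w').lt (some ⟨i, j⟩) (some h))
    (h2 : (Pw w').le (some h) (some ⟨i, j'⟩)) : h.1 = i := by
  letI := Pw w'
  letI := PwFirm w'
  by_contra hne
  obtain ⟨i0, j0⟩ := h
  rcases lt_trichotomy (some i0 : Option ι) (some i) with hlt | heq | hlt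
  · exact absurd (hcond1 w' i i0 j j0 hlt) (not_lt.2 h1.le)
  · exact hne (by injection heq)
  · exact absurd (hcond1 w' i0 i j0 j' hlt) (not_lt.2 h2)

lemma invs_step
    (hcond1 : ∀ (w : W) (i i' : ι) (j : Fin (J i)) (j' : Fin (J i')),
      (PwFirm w).lt (some i') (some i) → (Pw w).lt (some ⟨i', j'⟩) (some ⟨i, j⟩))
    (hcond0 : ∀ (w : W) (i : ι) (j : Fin (J i)),
      ((PwFirm w).lt none (some i) ↔ (Pw w).lt none (some ⟨i, j⟩)))
    {st : DAState ι W J} (hI : Invs Pf Pw st) : Invs Pf Pw (stepF Pf Pw st) := by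
  constructor
  · -- inv1
    intro f w hL
    have hch := (stepF_lam_iff Pf Pw).1 hL
    have hc := chosen_spec Pf Pw hch
    rw [stepF_rej_iff]
    push_neg
    refine ⟨?_, fun _ => hch⟩
    rcases hc with hp | hl
    · exact (proposalF_spec Pf hp).2.1
    · exact hI.inv1 f w hl
  · -- ir
    intro f w hL
    have hc := chosen_spec Pf Pw ((stepF_lam_iff Pf Pw).1 hL)
    rcases hc with hp | hl
    · exact (proposalF_spec Pf hp).2.2.1
    · exact hI.ir f w hl
  · -- wr
    intro f w hL
    have hch := (stepF_lam_iff Pf Pw).1 hL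
    have := none_le_chosen Pf Pw (st := st) (w := w)
    rwa [hch] at this
  · -- inv3
    intro f w w' hL hlt
    letI := Pf f
    have hch := (stepF_lam_iff Pf Pw).1 hL
    have hc := chosen_spec Pf Pw hch
    rw [stepF_rej_iff]
    left
    rcases hc with hp | hl
    · by_contra hmem
      exact absurd hlt (not_lt.2 ((proposalF_spec Pf hp).2.2.2.1 w' hmem))
    · exact hI.inv3 f w w' hl hlt
  · -- inv4
    intro f w hw
    letI := Pw w
    rcases (stepF_rej_iff Pf Pw).1 hw with hold | ⟨hc, hne⟩
    · rcases hI.inv4 f w hold with h1 | ⟨g, hg, hlt⟩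
      · exact Or.inl h1
      · have hle := le_chosen Pf Pw (st := st) (Or.inr hg : Cand Pf st g w)
        cases hch : chosenByWorker Pf Pw st w with
        | none =>
          rw [hch] at hle
          have := hI.wr g w hg
          exact absurd (le_antisymm hle this) (by simp)
        | some g' =>
          rw [hch] at hle
          exact Or.inr ⟨g', (stepF_lam_iff Pf Pw).2 hch, lt_of_lt_of_le hlt hle⟩
    · have hle := le_chosen Pf Pw (st := st) hc
      cases hch : chosenByWorker Pf Pw st w with
      | none =>
        rw [hch] at hle
        exact Or.inl (lt_of_le_of_ne hle (by simp))
      | some g' =>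
        rw [hch] at hle
        refine Or.inr ⟨g', (stepF_lam_iff Pf Pw).2 hch, lt_of_le_of_ne hle ?_⟩
        intro he
        obtain rfl : f = g' := by injection he
        exact hne hch
  · -- invE
    intro i j j' w w' hf hg hlt
    letI := Pf (⟨i, j⟩ : Σ i : ι, Fin (J i))
    have hchf := (stepF_lam_iff Pf Pw).1 hf
    have hchg := (stepF_lam_iff Pf Pw).1 hg
    have hcf := chosen_spec Pf Pw hchf
    have hcg := chosen_spec Pf Pw hchg
    rcases hcg with hpg | hlg
    · -- g newly proposes to w'
      have hrej : w' ∈ st.rej ⟨i, j⟩ := by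
        rcases hcf with hpf | hlf
        · by_contra hmem
          exact absurd hlt (not_lt.2 ((proposalF_spec Pf hpf).2.2.2.1 w' hmem))
        · exact hI.inv3 _ w w' hlf hlt
      rcases hI.inv4 _ w' hrej with h1 | ⟨h, hh, hfh⟩
      · -- w' finds f unacceptable: contradiction via hcond0
        letI := Pw w'
        have hgl : (Pw w').le none (some ⟨i, j'⟩) := by
          have := none_le_chosen Pf Pw (st := st) (w := w')
          rwa [hchg] at this
        have h2 : ¬ (PwFirm w').lt none (some i) := by
          rw [hcond0 w' i j]
          exact not_lt.2 h1.le
        rw [hcond0 w' i j'] at h2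
        exact absurd (le_antisymm (not_lt.1 h2) hgl) (by simp)
      · have hle : (Pw w').le (some h) (some ⟨i, j'⟩) := by
          have := le_chosen Pf Pw (st := st) (Or.inr hh : Cand Pf st h w')
          rwa [hchg] at this
        have hhi : h.1 = i := sandwich Pw PwFirm hcond1 hfh hle
        obtain ⟨i0, j0⟩ := h
        obtain rfl : i0 = i := hhi
        rcases hcf with hpf | hlf
        · exact absurd hlt ((proposalF_spec Pf hpf).2.2.2.2 j0 w' hh)
        · exact hI.invE i0 j j0 w w' hlf hh hlt
    · -- g carried
      rcases hcf with hpf | hlf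
      · exact absurd hlt ((proposalF_spec Pf hpf).2.2.2.2 j' w' hlg)
      · exact hI.invE i j j' w w' hlf hlg hlt

lemma DAState.ext' {st st' : DAState ι W J} (h1 : st.lam = st'.lam)
    (h2 : st.rej = st'.rej) : st = st' := by
  cases st; cases st'; cases h1; cases h2; rfl

/-- total size of rejection sets -/
def Rpot (st : DAState ι W J) : ℕ := ∑ f : Σ i : ι, Fin (J i), (st.rej f).card

/-- number of matched firm-copies -/
def Mpot (st : DAState ι W J) : ℕ :=
  (Finset.univ.filter (fun f : Σ i : ι, Fin (J i) => st.lam f ≠ none)).card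

lemma R_mono (st : DAState ι W J) : Rpot st ≤ Rpot (stepF Pf Pw st) :=
  Finset.sum_le_sum (fun f _ => Finset.card_le_card (stepF_rej_subset Pf Pw st f))

lemma rej_eq_of_R_eq {st : DAState ι W J}
    (hR : Rpot (stepF Pf Pw st) = Rpot st) (f : Σ i : ι, Fin (J i)) :
    (stepF Pf Pw st).rej f = st.rej f := by
  refine (Finset.eq_of_subset_of_card_le (stepF_rej_subset Pf Pw st f) ?_).symm
  by_contra hc
  push_neg at hc
  have : Rpot st < Rpot (stepF Pf Pw st) :=
    Finset.sum_lt_sum (fun g _ => Finset.card_le_card (stepF_rej_subset Pf Pw st g))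
      ⟨f, Finset.mem_univ _, hc⟩
  omega

lemma lam_preserved {st : DAState ι W J} (hI : Invs Pf Pw st)
    (hR : ∀ f, (stepF Pf Pw st).rej f = st.rej f) {f : Σ i : ι, Fin (J i)} {w : W}
    (h : st.lam f = some w) : (stepF Pf Pw st).lam f = some w := by
  rw [stepF_lam_iff]
  by_contra hne
  have : w ∈ (stepF Pf Pw st).rej f :=
    (stepF_rej_iff Pf Pw).2 (Or.inr ⟨Or.inr h, hne⟩)
  rw [hR f] at this
  exact hI.inv1 f w h this

lemma M_mono {st : DAState ι W J} (hI : Invs Pf Pw st)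
    (hR : ∀ f, (stepF Pf Pw st).rej f = st.rej f) :
    Mpot st ≤ Mpot (stepF Pf Pw st) := by
  apply Finset.card_le_card
  intro f hf
  rcases Finset.mem_filter.1 hf with ⟨_, hne⟩
  cases h : st.lam f with
  | none => exact absurd h hne
  | some w =>
    exact Finset.mem_filter.2 ⟨Finset.mem_univ _,
      by rw [lam_preserved Pf Pw hI hR h]; simp⟩

lemma step_eq_of_pots {st : DAState ι W J} (hI : Invs Pf Pw st)
    (hR : ∀ f, (stepF Pf Pw st).rej f = st.rej f)
    (hM : Mpot (stepF Pf Pw st) = Mpot st) : stepF Pf Pw st = st := by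
  have hsub : (Finset.univ.filter (fun f : Σ i : ι, Fin (J i) => st.lam f ≠ none)) ⊆
      (Finset.univ.filter (fun f : Σ i : ι, Fin (J i) => (stepF Pf Pw st).lam f ≠ none)) := by
    intro f hf
    rcases Finset.mem_filter.1 hf with ⟨_, hne⟩
    cases h : st.lam f with
    | none => exact absurd h hne
    | some w =>
      exact Finset.mem_filter.2 ⟨Finset.mem_univ _,
        by rw [lam_preserved Pf Pw hI hR h]; simp⟩
  apply DAState.ext'
  · funext f
    cases h : st.lam f with
    | some w => exact lam_preserved Pf Pw hI hR h
    | none =>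
      cases h' : (stepF Pf Pw st).lam f with
      | none => rfl
      | some w =>
        exfalso
        have hss : (Finset.univ.filter (fun f : Σ i : ι, Fin (J i) => st.lam f ≠ none)) ⊂
            (Finset.univ.filter (fun f : Σ i : ι, Fin (J i) => (stepF Pf Pw st).lam f ≠ none)) := by
          refine Finset.ssubset_iff_of_subset hsub |>.2 ⟨f, ?_, ?_⟩
          · exact Finset.mem_filter.2 ⟨Finset.mem_univ _, by rw [h']; simp⟩
          · simp [h]
        have := Finset.card_lt_card hss
        rw [Mpot, Mpot] at hM
        omega
  · funext f; exact hR f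

/-- combined potential -/
def Pot (st : DAState ι W J) : ℕ :=
  Rpot st * (Fintype.card (Σ i : ι, Fin (J i)) + 1) + Mpot st

lemma Mpot_le (st : DAState ι W J) : Mpot st ≤ Fintype.card (Σ i : ι, Fin (J i)) := by
  rw [Mpot, ← Finset.card_univ]
  exact Finset.card_filter_le _ _

lemma Rpot_le (st : DAState ι W J) :
    Rpot st ≤ Fintype.card (Σ i : ι, Fin (J i)) * Fintype.card W := by
  rw [Rpot]
  calc ∑ f : Σ i : ι, Fin (J i), (st.rej f).card
      ≤ ∑ _f : Σ i : ι, Fin (J i), Fintype.card W :=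
        Finset.sum_le_sum (fun f _ => by
          have := Finset.card_le_card (Finset.subset_univ (st.rej f))
          rwa [Finset.card_univ] at this)
    _ = Fintype.card (Σ i : ι, Fin (J i)) * Fintype.card W := by
        simp [Finset.sum_const, Finset.card_univ, mul_comm]

lemma pot_lt_of_ne {st : DAState ι W J} (hI : Invs Pf Pw st)
    (hne : stepF Pf Pw st ≠ st) : Pot st < Pot (stepF Pf Pw st) := by
  have hRm := R_mono Pf Pw st
  rcases lt_or_eq_of_le hRm with hRlt | hReq
  · rw [Pot, Pot]
    calc Rpot st * (Fintype.card (Σ i : ι, Fin (J i)) + 1) + Mpot st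
        ≤ Rpot st * (Fintype.card (Σ i : ι, Fin (J i)) + 1) +
            Fintype.card (Σ i : ι, Fin (J i)) := by
          have := Mpot_le st; omega
      _ < (Rpot st + 1) * (Fintype.card (Σ i : ι, Fin (J i)) + 1) := by
          rw [Nat.succ_mul]; omega
      _ ≤ Rpot (stepF Pf Pw st) * (Fintype.card (Σ i : ι, Fin (J i)) + 1) :=
          Nat.mul_le_mul_right _ (Nat.succ_le_of_lt hRlt)
      _ ≤ Rpot (stepF Pf Pw st) * (Fintype.card (Σ i : ι, Fin (J i)) + 1) +
            Mpot (stepF Pf Pw st) := Nat.le_add_right _ _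
  · have hR : ∀ f, (stepF Pf Pw st).rej f = st.rej f := rej_eq_of_R_eq Pf Pw hReq.symm
    have hMm := M_mono Pf Pw hI hR
    rcases lt_or_eq_of_le hMm with hMlt | hMeq
    · rw [Pot, Pot, ← hReq]; omega
    · exact absurd (step_eq_of_pots Pf Pw hI hR hMeq.symm) hne

lemma pot_le (st : DAState ι W J) :
    Pot st ≤ (Fintype.card (Σ i : ι, Fin (J i)) * Fintype.card W) *
      (Fintype.card (Σ i : ι, Fin (J i)) + 1) + Fintype.card (Σ i : ι, Fin (J i)) := by
  rw [Pot]
  have h1 := Rpot_le st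
  have h2 := Mpot_le st
  have h3 := Nat.mul_le_mul_right (Fintype.card (Σ i : ι, Fin (J i)) + 1) h1
  omega

lemma arith_bound (a b : ℕ) : a * b * (a + 1) + a < (a * b + 1) * (a + b + 2) := by
  have h : (a * b + 1) * (a + b + 2) =
      a * b * (a + 1) + a + (a * b * b + a * b + b + 2) := by ring
  omega

lemma fixed_reached
    (hcond1 : ∀ (w : W) (i i' : ι) (j : Fin (J i)) (j' : Fin (J i')),
      (PwFirm w).lt (some i') (some i) → (Pw w).lt (some ⟨i', j'⟩) (some ⟨i, j⟩))
    (hcond0 : ∀ (w : W) (i : ι) (j : Fin (J i)),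
      ((PwFirm w).lt none (some i) ↔ (Pw w).lt none (some ⟨i, j⟩))) :
    (stepF Pf Pw)
      ((stepF Pf Pw)^[(Fintype.card (Σ i : ι, Fin (J i)) * Fintype.card W + 1) *
        (Fintype.card (Σ i : ι, Fin (J i)) + Fintype.card W + 2)]
       (⟨fun _ => none, fun _ => ∅⟩ : DAState ι W J)) =
    ((stepF Pf Pw)^[(Fintype.card (Σ i : ι, Fin (J i)) * Fintype.card W + 1) *
        (Fintype.card (Σ i : ι, Fin (J i)) + Fintype.card W + 2)]
       (⟨fun _ => none, fun _ => ∅⟩ : DAState ι W J)) := by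
  set N := (Fintype.card (Σ i : ι, Fin (J i)) * Fintype.card W + 1) *
    (Fintype.card (Σ i : ι, Fin (J i)) + Fintype.card W + 2) with hN
  set st0 : DAState ι W J := ⟨fun _ => none, fun _ => ∅⟩ with hst0
  have hInv : ∀ k, Invs Pf Pw ((stepF Pf Pw)^[k] st0) := by
    intro k
    induction k with
    | zero => exact invs_init Pf Pw
    | succ k ih =>
      rw [Function.iterate_succ_apply']
      exact invs_step Pf Pw PwFirm hcond1 hcond0 ih
  by_contra hne
  have hallne : ∀ k ≤ N, stepF Pf Pw ((stepF Pf Pw)^[k] st0) ≠ (stepF Pf Pw)^[k] st0 := by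
    intro k hk hfix
    apply hne
    have heq : (stepF Pf Pw)^[N] st0 = (stepF Pf Pw)^[k] st0 := by
      have h' : N = (N - k) + k := by omega
      rw [h', Function.iterate_add_apply]
      exact Function.iterate_fixed hfix _
    rw [heq]
    exact hfix
  have hpot : ∀ k ≤ N, k ≤ Pot ((stepF Pf Pw)^[k] st0) := by
    intro k
    induction k with
    | zero => omega
    | succ k ih =>
      intro hk
      have h1 := ih (by omega)
      have h2 := pot_lt_of_ne Pf Pw (hInv k) (hallne k (by omega))
      rw [Function.iterate_succ_apply']
      omega
  have hb := hpot N le_rfl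
  have hub := pot_le ((stepF Pf Pw)^[N] st0)
  have har := arith_bound (Fintype.card (Σ i : ι, Fin (J i))) (Fintype.card W)
  omega

lemma proposalF_none_spec {st : DAState ι W J} {f : Σ i : ι, Fin (J i)}
    (hlam : st.lam f = none) (hnone : proposalF Pf st f = none) {w1 : W}
    (hb : bestOf (Pf f)
      (insert none ((Finset.univ.filter (fun w : W => w ∉ st.rej f)).image some))
      = some w1) :
    ∃ (j2 : Fin (J f.1)) (w2 : W), st.lam ⟨f.1, j2⟩ = some w2 ∧
      (Pf f).lt (some w1) (some w2) := by
  rw [proposalF] at hnone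
  simp only [hlam, ne_eq, not_true_eq_false, if_false, not_false_eq_true, if_true] at hnone
  rw [hb] at hnone
  replace hnone : (if ∀ (j' : Fin (J f.1)) (w' : W),
      st.lam ⟨f.1, j'⟩ = some w' → ¬ (Pf f).lt (some w1) (some w')
      then some w1 else none) = none := hnone
  by_cases ha : ∀ (j' : Fin (J f.1)) (w' : W),
      st.lam ⟨f.1, j'⟩ = some w' → ¬ (Pf f).lt (some w1) (some w')
  · rw [if_pos ha] at hnone; exact absurd hnone (by simp)
  · push_neg at ha
    obtain ⟨j2, w2, h1, h2⟩ := ha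
    exact ⟨j2, w2, h1, h2⟩

end Aux

/-- Theorem 1: the output `λ_F` of the adapted
firm-copies-proposing deferred acceptance algorithm is a (well-defined)
stable* matching; in particular the set of stable* matchings of the associated
one-to-one market is nonempty. -/
theorem daOutputF_stableStar
    (Pf : (Σ i : ι, Fin (J i)) → LinearOrder (Option W))
    (Pw : W → LinearOrder (Option (Σ i : ι, Fin (J i))))
    (PwFirm : W → LinearOrder (Option ι))
    -- condition (1): copies of a more preferred firm rank above copies of a
    -- less preferred firm
    (hcond1 : ∀ (w : W) (i i' : ι) (j : Fin (J i)) (j' : Fin (J i')),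
      (PwFirm w).lt (some i') (some i) →
        (Pw w).lt (some ⟨i', j'⟩) (some ⟨i, j⟩))
    -- condition (1) for ∅: a firm is acceptable iff its copies are
    (hcond0 : ∀ (w : W) (i : ι) (j : Fin (J i)),
      ((PwFirm w).lt none (some i) ↔ (Pw w).lt none (some ⟨i, j⟩)))
    -- condition (2): copies of the same firm are ranked by index
    (hcond2 : ∀ (w : W) (i : ι) (j j' : Fin (J i)),
      ((Pw w).lt (some ⟨i, j'⟩) (some ⟨i, j⟩) ↔ (j : ℕ) < (j' : ℕ))) :
    -- λ_F is a one-to-one matching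
    (∀ (f : Σ i : ι, Fin (J i)) (w : W),
      daOutputF Pf Pw f = some w ↔ daOutputFW Pf Pw w = some f) ∧
    -- no worker blocks*
    (∀ w : W, ¬ (Pw w).lt (daOutputFW Pf Pw w) none) ∧
    -- no firm-copy blocks*: individual rationality and no envy among copies
    (∀ f : Σ i : ι, Fin (J i),
      ¬ ((Pf f).lt (daOutputF Pf Pw f) none ∨
        (daOutputF Pf Pw f ≠ none ∧
          ∃ j' : Fin (J f.1), (Pf f).lt (daOutputF Pf Pw f) (daOutputF Pf Pw ⟨f.1, j'⟩)))) ∧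
    -- no blocking* pair
    (∀ (f : Σ i : ι, Fin (J i)) (w : W),
      ¬ ((Pw w).lt (daOutputFW Pf Pw w) (some f) ∧
        ∀ j' : Fin (J f.1), (Pf f).lt (daOutputF Pf Pw ⟨f.1, j'⟩) (some w))) := by
  set stN : DAState ι W J :=
    (stepF Pf Pw)^[(Fintype.card (Σ i : ι, Fin (J i)) * Fintype.card W + 1) *
      (Fintype.card (Σ i : ι, Fin (J i)) + Fintype.card W + 2)]
    ⟨fun _ => none, fun _ => ∅⟩ with hstN
  have hout : ∀ f, daOutputF Pf Pw f = stN.lam f := fun _ => rfl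
  have hfix : stepF Pf Pw stN = stN := fixed_reached Pf Pw PwFirm hcond1 hcond0
  have hI : Invs Pf Pw stN := by
    rw [hstN]
    generalize (Fintype.card (Σ i : ι, Fin (J i)) * Fintype.card W + 1) *
      (Fintype.card (Σ i : ι, Fin (J i)) + Fintype.card W + 2) = k
    induction k with
    | zero => exact invs_init Pf Pw
    | succ k ih =>
      rw [Function.iterate_succ_apply']
      exact invs_step Pf Pw PwFirm hcond1 hcond0 ih
  have hiff : ∀ (f : Σ i : ι, Fin (J i)) (w : W),
      stN.lam f = some w ↔ chosenByWorker Pf Pw stN w = some f := by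
    intro f w
    have h := stepF_lam_iff Pf Pw (st := stN) (f := f) (w := w)
    rwa [hfix] at h
  have hinj : ∀ (f g : Σ i : ι, Fin (J i)) (w : W),
      stN.lam f = some w → stN.lam g = some w → f = g := by
    intro f g w hf hg
    have h1 := (hiff f w).1 hf
    have h2 := (hiff g w).1 hg
    rw [h1] at h2
    injection h2
  have hrejfix : ∀ f, (stepF Pf Pw stN).rej f = stN.rej f := fun f => by rw [hfix]
  have hprop : ∀ f, proposalF Pf stN f = none := by
    intro f
    cases hp : proposalF Pf stN f with
    | none => rfl
    | some w2 =>
      exfalso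
      by_cases hch : chosenByWorker Pf Pw stN w2 = some f
      · have hl := (hiff f w2).2 hch
        exact absurd (proposalF_spec Pf hp).1 (by rw [hl]; simp)
      · have hmem : w2 ∈ (stepF Pf Pw stN).rej f :=
          (stepF_rej_iff Pf Pw).2 (Or.inr ⟨Or.inl hp, hch⟩)
        rw [hrejfix] at hmem
        exact (proposalF_spec Pf hp).2.1 hmem
  have hFW : ∀ (w : W) (f : Σ i : ι, Fin (J i)),
      daOutputFW Pf Pw w = some f ↔ stN.lam f = some w := by
    intro w f
    rw [daOutputFW]
    constructor
    · intro h
      split at h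
      · next hex =>
          obtain rfl : hex.choose = f := by injection h
          exact hex.choose_spec
      · exact absurd h (by simp)
    · intro h
      have hex : ∃ f' : Σ i : ι, Fin (J i), daOutputF Pf Pw f' = some w := ⟨f, h⟩
      rw [dif_pos hex]
      exact congrArg some (hinj _ _ w hex.choose_spec h)
  -- bullet 2 first (used in bullet 4)
  have hB2 : ∀ w : W, ¬ (Pw w).lt (daOutputFW Pf Pw w) none := by
    intro w
    letI := Pw w
    cases h : daOutputFW Pf Pw w with
    | none => exact lt_irrefl none
    | some f =>
      have hl := (hFW w f).1 h
      exact not_lt.2 (hI.wr f w hl)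
  refine ⟨?_, hB2, ?_, ?_⟩
  · -- bullet 1
    intro f w
    rw [hFW w f, hout f]
  · -- bullet 3
    intro f
    letI := Pf f
    rintro (hA | ⟨hne, j', hB⟩)
    · cases h : daOutputF Pf Pw f with
      | none => rw [h] at hA; exact lt_irrefl none hA
      | some w =>
        rw [h] at hA
        rw [hout] at h
        exact absurd hA (not_lt.2 (hI.ir f w h))
    · cases h : daOutputF Pf Pw f with
      | none => exact hne h
      | some w =>
        rw [h] at hB
        cases h' : daOutputF Pf Pw ⟨f.1, j'⟩ with
        | none =>
          rw [h'] at hB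
          rw [hout] at h
          exact absurd (lt_trans hB (lt_of_le_of_ne (hI.ir f w h) (by simp)))
            (lt_irrefl _)
        | some w' =>
          rw [h'] at hB
          rw [hout] at h h'
          exact hI.invE f.1 f.2 j' w w' h h' hB
  · -- bullet 4
    rintro ⟨i, j⟩ w ⟨hblk, hall⟩
    have hj := hall j
    rw [hout] at hj
    have hnotrej : w ∉ stN.rej ⟨i, j⟩ := by
      intro hrej
      letI := Pw w
      rcases hI.inv4 _ w hrej with h1 | ⟨g, hg, hlt⟩
      · exact hB2 w (lt_trans hblk h1)
      · have hgw : daOutputFW Pf Pw w = some g := (hFW w g).2 hg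
        rw [hgw] at hblk
        exact lt_asymm hblk hlt
    cases hf : stN.lam ⟨i, j⟩ with
    | some w0 =>
      rw [hf] at hj
      exact hnotrej (hI.inv3 _ w0 w hf hj)
    | none =>
      rw [hf] at hj
      letI := Pf (⟨i, j⟩ : Σ i : ι, Fin (J i))
      have hwmem : (some w : Option W) ∈
          insert none ((Finset.univ.filter
            (fun w' : W => w' ∉ stN.rej ⟨i, j⟩)).image some) :=
        Finset.mem_insert_of_mem (Finset.mem_image.2 ⟨w,
          Finset.mem_filter.2 ⟨Finset.mem_univ _, hnotrej⟩, rfl⟩)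
      have hle := le_bestOf (Pf ⟨i, j⟩) hwmem
      cases hb : bestOf (Pf ⟨i, j⟩)
          (insert none ((Finset.univ.filter
            (fun w' : W => w' ∉ stN.rej ⟨i, j⟩)).image some)) with
      | none =>
        rw [hb] at hle
        exact absurd (lt_of_lt_of_le hj hle) (lt_irrefl _)
      | some w1 =>
        rw [hb] at hle
        obtain ⟨j2, w2, hl2, hlt2⟩ :=
          proposalF_none_spec Pf hf (hprop ⟨i, j⟩) hb
        have h2 := hall j2
        rw [hout, hl2] at h2
        exact absurd (lt_trans (lt_of_le_of_lt hle hlt2) h2) (lt_irrefl _)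

end
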